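/- Let Q be a finite quiver and v ∈ ℕ^{Q₀} a nonzero dimension vector. If the moment map μ of (Q,v) is flat, then the support {i ∈ Q₀ : v_i > 0} induces a connected full subgraph of the underlying graph of Q. -/

import Mathlib

set_option linter.unusedSectionVars false

open MvPolynomial Matrix

noncomputable section

namespace QuiverScheme

/-- Cast a square matrix along an equality of sizes. -/
def castSq {R : Type*} {n m : ℕ} (e : n = m) (M : Matrix (Fin n) (Fin n) R) :
    Matrix (Fin m) (Fin m) R :=
  M.submatrix (finCongr e.symm) (finCongr e.symm)

variable {Q0 : Type} [Fintype Q0] [DecidableEq Q0]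
variable {Q1 : Type} [Fintype Q1] (tl hd : Q1 → Q0)
variable (v : Q0 → ℕ)

/-- Index of coordinates on `T^*R(Q,v)`: for each arrow `a`, entries of `x_a` and of `y_a`. -/
abbrev RepIdx : Type :=
  Σ a : Q1, (Fin (v (hd a)) × Fin (v (tl a))) ⊕ (Fin (v (tl a)) × Fin (v (hd a)))

/-- The coordinate ring of `T^*R(Q,v)`. -/
abbrev RepRing : Type := MvPolynomial (RepIdx tl hd v) ℂ

/-- The generic matrix `x_a`. -/
def Xm (a : Q1) : Matrix (Fin (v (hd a))) (Fin (v (tl a))) (RepRing tl hd v) :=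
  Matrix.of fun j k => MvPolynomial.X ⟨a, Sum.inl (j, k)⟩

/-- The generic matrix `y_a`. -/
def Ym (a : Q1) : Matrix (Fin (v (tl a))) (Fin (v (hd a))) (RepRing tl hd v) :=
  Matrix.of fun j k => MvPolynomial.X ⟨a, Sum.inr (j, k)⟩

/-- The `i`-th component of the moment map, as a matrix of polynomials:
`μ(x,y)_i = ∑_{a : h(a)=i} x_a y_a - ∑_{a : t(a)=i} y_a x_a`. -/
def muMat (i : Q0) : Matrix (Fin (v i)) (Fin (v i)) (RepRing tl hd v) :=
  (∑ a : Q1, if h : hd a = i then castSq (congrArg v h) (Xm tl hd v a * Ym tl hd v a)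
    else 0)
  - ∑ a : Q1, if h : tl a = i then castSq (congrArg v h) (Ym tl hd v a * Xm tl hd v a)
    else 0

/-- Index of coordinates on `⊕_i gl(v_i)`. -/
abbrev GlIdx : Type := Σ i : Q0, Fin (v i) × Fin (v i)

/-- The coordinate ring of `⊕_i gl(v_i)`. -/
abbrev GlRing : Type := MvPolynomial (GlIdx v) ℂ

/-- The sum-of-traces linear form, as a polynomial on `⊕_i gl(v_i)`. -/
def tracePoly : GlRing v := ∑ i : Q0, ∑ k : Fin (v i), MvPolynomial.X ⟨i, (k, k)⟩

/-- The coordinate ring of `g(v)^* = {ξ : ∑_i tr ξ_i = 0}`. -/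
abbrev GRing : Type := GlRing v ⧸ Ideal.span {tracePoly v}

/-- The comoment map on the coordinate ring of `⊕_i gl(v_i)`. -/
def comomentAux : GlRing v →ₐ[ℂ] RepRing tl hd v :=
  MvPolynomial.aeval fun p : GlIdx v => muMat tl hd v p.1 p.2.1 p.2.2

lemma trace_castSq {R : Type*} [AddCommMonoid R] {n m : ℕ} (e : n = m)
    (M : Matrix (Fin n) (Fin n) R) : (castSq e M).trace = M.trace := by
  subst e
  rfl

lemma comomentAux_tracePoly : comomentAux tl hd v (tracePoly v) = 0 := by
  classical
  have h1 : comomentAux tl hd v (tracePoly v)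
      = ∑ i : Q0, (muMat tl hd v i).trace := by
    simp only [tracePoly, map_sum, comomentAux, MvPolynomial.aeval_X]
    rfl
  rw [h1]
  have h2 : ∀ i : Q0, (muMat tl hd v i).trace
      = (∑ a : Q1, if h : hd a = i then (Xm tl hd v a * Ym tl hd v a).trace else 0)
        - ∑ a : Q1, if h : tl a = i then (Ym tl hd v a * Xm tl hd v a).trace else 0 := by
    intro i
    rw [muMat, Matrix.trace_sub, Matrix.trace_sum, Matrix.trace_sum]
    congr 1 <;>
    · refine Finset.sum_congr rfl fun a _ => ?_
      split
      · rw [trace_castSq]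
      · simp
  rw [Finset.sum_congr rfl fun i _ => h2 i]
  rw [Finset.sum_sub_distrib]
  rw [Finset.sum_comm, Finset.sum_comm (s := (Finset.univ : Finset Q0))]
  have h3 : ∀ a : Q1,
      (∑ i : Q0, if h : hd a = i then (Xm tl hd v a * Ym tl hd v a).trace else 0)
      = (Xm tl hd v a * Ym tl hd v a).trace := by
    intro a
    rw [Finset.sum_dite_eq]
    simp
  have h4 : ∀ a : Q1,
      (∑ i : Q0, if h : tl a = i then (Ym tl hd v a * Xm tl hd v a).trace else 0)
      = (Ym tl hd v a * Xm tl hd v a).trace := by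
    intro a
    rw [Finset.sum_dite_eq]
    simp
  rw [Finset.sum_congr rfl fun a _ => h3 a, Finset.sum_congr rfl fun a _ => h4 a]
  rw [sub_eq_zero]
  exact Finset.sum_congr rfl fun a _ => Matrix.trace_mul_comm _ _

/-- The comoment map `ℂ[g(v)^*] → ℂ[T^*R(Q,v)]`. -/
def comoment : GRing v →+* RepRing tl hd v :=
  Ideal.Quotient.lift (Ideal.span {tracePoly v})
    (comomentAux tl hd v).toRingHom
    (by
      intro a ha
      rw [Ideal.mem_span_singleton'] at ha
      obtain ⟨c, rfl⟩ := ha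
      simp only [AlgHom.toRingHom_eq_coe, RingHom.coe_coe, _root_.map_mul]
      rw [comomentAux_tracePoly]
      simp)

/-- The moment map `μ : T^*R(Q,v) → g(v)^*` is flat, i.e. `ℂ[T^*R(Q,v)]` is a flat
`ℂ[g(v)^*]`-module via the comoment map. -/
def MomentFlat : Prop :=
  letI : Algebra (GRing v) (RepRing tl hd v) := (comoment tl hd v).toAlgebra
  Module.Flat (GRing v) (RepRing tl hd v)

/-- The underlying graph of the quiver `Q`: vertices `Q₀`, with an edge between `i` and `j`
for each arrow between them (loops are irrelevant for connectivity). -/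
def underlyingGraph : SimpleGraph Q0 where
  Adj i j := i ≠ j ∧ ∃ a : Q1, (tl a = i ∧ hd a = j) ∨ (tl a = j ∧ hd a = i)
  symm := ⟨by
    rintro i j ⟨hne, a, h⟩
    exact ⟨hne.symm, a, h.symm⟩⟩
  loopless := ⟨fun i h => h.1 rfl⟩

/-! ### Auxiliary lemmas for the proof -/

lemma flat_smul_injective {R M' : Type*} [CommRing R] [AddCommGroup M'] [Module R M']
    [Module.Flat R M'] {r : R} (hr : Function.Injective fun x : R => r * x) :
    Function.Injective fun m : M' => r • m := by
  have hinj : Function.Injective (LinearMap.lsmul R R r) := by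
    exact fun x y hxy => hr hxy
  have h2 := Module.Flat.rTensor_preserves_injective_linearMap
    (M := M') (LinearMap.lsmul R R r) hinj
  intro a b hab
  have key : ∀ m : M', (LinearMap.lsmul R R r).rTensor M' ((TensorProduct.lid R M').symm m)
      = (TensorProduct.lid R M').symm (r • m) := by
    intro m
    simp [TensorProduct.lid_symm_apply, TensorProduct.smul_tmul', TensorProduct.smul_tmul]
  have h3 : (TensorProduct.lid R M').symm a = (TensorProduct.lid R M').symm b :=
    h2 (by rw [key, key]; exact congrArg _ hab)
  exact (TensorProduct.lid R M').symm.injective h3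

lemma prime_X_mv {σ : Type} (s₀ : σ) : Prime (MvPolynomial.X s₀ : MvPolynomial σ ℂ) := by
  classical
  let e : σ ≃ Option {b : σ // b ≠ s₀} := (Equiv.optionSubtypeNe s₀).symm
  let Φ := (renameEquiv ℂ e).trans (optionEquivLeft ℂ {b : σ // b ≠ s₀})
  have he : e s₀ = none := by simp [e, Equiv.symm_apply_eq]
  have hΦ : Φ (X s₀) = Polynomial.X := by
    simp [Φ, renameEquiv_apply, rename_X, he, optionEquivLeft_X_none]
  rw [← MulEquiv.prime_iff Φ.toMulEquiv]
  have : Φ.toMulEquiv (X s₀) = Polynomial.X := hΦ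
  rw [this]
  exact Polynomial.prime_X

lemma trace_zero_of_dim_zero {R : Type*} [AddCommMonoid R] {n : ℕ} (h : n = 0)
    (M : Matrix (Fin n) (Fin n) R) : M.trace = 0 := by
  subst h
  simp [Matrix.trace]

/-- Summing a single-diagonal-point indicator over a set of vertices. -/
lemma sum_diag_ind {M : Type*} [AddCommMonoid M] (s : Finset Q0) (c : Q0)
    (k' : Fin (v c)) (x : M) :
    (∑ i ∈ s, ∑ k : Fin (v i), if (⟨i, (k, k)⟩ : GlIdx v) = ⟨c, (k', k')⟩ then x else 0)
      = if c ∈ s then x else 0 := by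
  have hinner : ∀ i : Q0,
      (∑ k : Fin (v i), if (⟨i, (k, k)⟩ : GlIdx v) = ⟨c, (k', k')⟩ then x else 0)
        = if i = c then x else 0 := by
    intro i
    by_cases h : i = c
    · subst h
      have hiff : ∀ k : Fin (v i), ((⟨i, (k, k)⟩ : GlIdx v) = ⟨i, (k', k')⟩) ↔ k = k' := by
        intro k
        simp
      simp only [hiff]
      simp [Finset.sum_ite_eq']
    · rw [if_neg h]
      refine Finset.sum_eq_zero fun k _ => ?_
      rw [if_neg]
      intro hk
      exact h (congrArg Sigma.fst hk)
  rw [Finset.sum_congr rfl fun i _ => hinner i]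
  simp [Finset.sum_ite_eq']

variable {v} in
/-- Substituting `X s₀ ↦ X s₀ + c` (other variables fixed) into the trace polynomial,
for a diagonal index `s₀`, adds `c`. -/
lemma aeval_shift_tracePoly (u : Q0) (k₀ : Fin (v u)) (c : GlRing v) :
    MvPolynomial.aeval
      (fun s : GlIdx v => if s = (⟨u, (k₀, k₀)⟩ : GlIdx v) then X s + c else X s)
      (tracePoly v) = tracePoly v + c := by
  classical
  rw [tracePoly]
  simp only [map_sum, aeval_X]
  have hpt : ∀ (i : Q0) (k : Fin (v i)),
      (if (⟨i, (k, k)⟩ : GlIdx v) = (⟨u, (k₀, k₀)⟩ : GlIdx v)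
        then X (⟨i, (k, k)⟩ : GlIdx v) + c else X (⟨i, (k, k)⟩ : GlIdx v))
      = X (⟨i, (k, k)⟩ : GlIdx v)
        + (if (⟨i, (k, k)⟩ : GlIdx v) = (⟨u, (k₀, k₀)⟩ : GlIdx v) then c else 0) := by
    intro i k
    split_ifs <;> simp
  simp only [hpt, Finset.sum_add_distrib]
  rw [sum_diag_ind v Finset.univ u k₀ c]
  simp [tracePoly]

variable {v} in
/-- The trace polynomial is a prime element. -/
lemma prime_tracePoly (u : Q0) (k₀ : Fin (v u)) : Prime (tracePoly v) := by
  classical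
  set s₀ : GlIdx v := ⟨u, (k₀, k₀)⟩ with hs₀
  set r₀ : GlRing v := tracePoly v - X s₀ with hr₀
  let F : GlIdx v → GlRing v := fun s => if s = s₀ then X s + r₀ else X s
  let G : GlIdx v → GlRing v := fun s => if s = s₀ then X s + (-r₀) else X s
  let f : GlRing v →ₐ[ℂ] GlRing v := MvPolynomial.aeval F
  let g : GlRing v →ₐ[ℂ] GlRing v := MvPolynomial.aeval G
  have hfX : f (X s₀) = X s₀ + r₀ := by simp [f, F]
  have hgX : g (X s₀) = X s₀ - r₀ := by simp [g, G, sub_eq_add_neg]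
  have hft : f (tracePoly v) = tracePoly v + r₀ := aeval_shift_tracePoly u k₀ r₀
  have hgt : g (tracePoly v) = tracePoly v - r₀ := by
    have := aeval_shift_tracePoly u k₀ (-(r₀))
    rw [sub_eq_add_neg]
    exact this
  have hfr : f r₀ = r₀ := by
    rw [hr₀, map_sub, hft, hfX]
    ring
  have hgr : g r₀ = r₀ := by
    rw [hr₀, map_sub, hgt, hgX]
    ring
  have hfg : f.comp g = AlgHom.id ℂ (GlRing v) := by
    apply MvPolynomial.algHom_ext
    intro s
    by_cases h : s = s₀
    · subst h
      simp only [AlgHom.comp_apply, AlgHom.id_apply, hgX, map_sub, hfX, hfr]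
      ring
    · simp only [AlgHom.comp_apply, AlgHom.id_apply]
      have : g (X s) = X s := by simp [g, G, h]
      rw [this]
      simp [f, F, h]
  have hgf : g.comp f = AlgHom.id ℂ (GlRing v) := by
    apply MvPolynomial.algHom_ext
    intro s
    by_cases h : s = s₀
    · subst h
      simp only [AlgHom.comp_apply, AlgHom.id_apply, hfX, map_add, hgX, hgr]
      ring
    · simp only [AlgHom.comp_apply, AlgHom.id_apply]
      have : f (X s) = X s := by simp [f, F, h]
      rw [this]
      simp [g, G, h]
  let Ψ : GlRing v ≃ₐ[ℂ] GlRing v := AlgEquiv.ofAlgHom f g hfg hgf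
  have hΨ : Ψ.toMulEquiv (X s₀) = tracePoly v := by
    show f (X s₀) = tracePoly v
    rw [hfX, hr₀]
    ring
  have := (MulEquiv.prime_iff Ψ.toMulEquiv (p := (X s₀ : GlRing v))).mpr (prime_X_mv s₀)
  rwa [hΨ] at this

/-- If the moment map of `(Q,v)` is flat and `v ≠ 0`, then the support of `v` induces a
connected full subgraph of the underlying graph of `Q`. -/
theorem support_connected_of_momentFlat (hv : v ≠ 0) (hflat : MomentFlat tl hd v) :
    ((underlyingGraph tl hd).induce {i : Q0 | 0 < v i}).Connected := by
  classical
  obtain ⟨i₀, hi₀⟩ : ∃ i, 0 < v i := by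
    by_contra h
    push_neg at h
    exact hv (funext fun i => Nat.le_zero.mp (h i))
  rw [SimpleGraph.connected_iff]
  refine ⟨?_, ⟨⟨i₀, hi₀⟩⟩⟩
  by_contra hpc
  rw [SimpleGraph.Preconnected] at hpc
  push_neg at hpc
  obtain ⟨u', w', hreach⟩ := hpc
  set Gr := (underlyingGraph tl hd).induce {i : Q0 | 0 < v i} with hGr
  -- the "reachable from u'" part of the support
  set A : Q0 → Prop := fun i => ∃ h : 0 < v i, Gr.Reachable u' ⟨i, h⟩ with hA
  have hAu : A u'.1 := ⟨u'.2, by exact SimpleGraph.Reachable.refl _⟩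
  have hAw : ¬ A w'.1 := by
    rintro ⟨h, hr⟩
    exact hreach (by rwa [show (⟨w'.1, h⟩ : {i : Q0 | 0 < v i}) = w' from Subtype.ext rfl] at hr)
  have huw : u'.1 ≠ w'.1 := by
    intro h
    exact hAw (h ▸ hAu)
  -- A is closed under arrows within the support
  have hstep : ∀ (a : Q1) (i j : Q0),
      ((tl a = i ∧ hd a = j) ∨ (tl a = j ∧ hd a = i)) → A i → 0 < v j → A j := by
    intro a i j harr hi hj
    obtain ⟨hvi, hr⟩ := hi
    by_cases hij : i = j
    · subst hij
      exact ⟨hj, by rwa [show (⟨i, hj⟩ : {i : Q0 | 0 < v i}) = ⟨i, hvi⟩ from Subtype.ext rfl]⟩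
    · have hadj : Gr.Adj ⟨i, hvi⟩ ⟨j, hj⟩ := by
        show (underlyingGraph tl hd).Adj i j
        exact ⟨hij, a, harr⟩
      exact ⟨hj, hr.trans hadj.reachable⟩
  set S : Finset Q0 := Finset.univ.filter (fun i => A i) with hS
  have hmemS : ∀ i, i ∈ S ↔ A i := by
    intro i
    simp [hS]
  set tA : GlRing v := ∑ i ∈ S, ∑ k : Fin (v i), X (⟨i, (k, k)⟩ : GlIdx v) with htA
  -- Step 1 : the comoment map kills tA
  have hmu : comomentAux tl hd v tA = 0 := by
    have h1 : comomentAux tl hd v tA = ∑ i ∈ S, (muMat tl hd v i).trace := by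
      simp only [htA, map_sum, comomentAux, MvPolynomial.aeval_X]
      rfl
    rw [h1]
    have h2 : ∀ i : Q0, (muMat tl hd v i).trace
        = (∑ a : Q1, if h : hd a = i then (Xm tl hd v a * Ym tl hd v a).trace else 0)
          - ∑ a : Q1, if h : tl a = i then (Ym tl hd v a * Xm tl hd v a).trace else 0 := by
      intro i
      rw [muMat, Matrix.trace_sub, Matrix.trace_sum, Matrix.trace_sum]
      congr 1 <;>
      · refine Finset.sum_congr rfl fun a _ => ?_
        split
        · rw [trace_castSq]
        · simp
    rw [Finset.sum_congr rfl fun i _ => h2 i]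
    rw [Finset.sum_sub_distrib, Finset.sum_comm, Finset.sum_comm (s := S)]
    rw [← Finset.sum_sub_distrib]
    refine Finset.sum_eq_zero fun a _ => ?_
    have e1 : (∑ i ∈ S, if h : hd a = i then (Xm tl hd v a * Ym tl hd v a).trace else 0)
        = if hd a ∈ S then (Xm tl hd v a * Ym tl hd v a).trace else 0 := by
      simp only [dite_eq_ite]
      exact Finset.sum_ite_eq S (hd a) (fun _ => (Xm tl hd v a * Ym tl hd v a).trace)
    have e2 : (∑ i ∈ S, if h : tl a = i then (Ym tl hd v a * Xm tl hd v a).trace else 0)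
        = if tl a ∈ S then (Ym tl hd v a * Xm tl hd v a).trace else 0 := by
      simp only [dite_eq_ite]
      exact Finset.sum_ite_eq S (tl a) (fun _ => (Ym tl hd v a * Xm tl hd v a).trace)
    rw [e1, e2]
    have htr := Matrix.trace_mul_comm (Xm tl hd v a) (Ym tl hd v a)
    by_cases hh : hd a ∈ S <;> by_cases ht : tl a ∈ S
    · rw [if_pos hh, if_pos ht, htr, sub_self]
    · -- head in A, tail not: then v (tl a) = 0
      have hvt : v (tl a) = 0 := by
        by_contra hvt
        have : 0 < v (tl a) := Nat.pos_of_ne_zero hvt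
        exact ht ((hmemS _).mpr
          (hstep a (hd a) (tl a) (Or.inr ⟨rfl, rfl⟩) ((hmemS _).mp hh) this))
      rw [if_pos hh, if_neg ht, htr, trace_zero_of_dim_zero hvt, sub_zero]
    · -- tail in A, head not: then v (hd a) = 0
      have hvt : v (hd a) = 0 := by
        by_contra hvt
        have : 0 < v (hd a) := Nat.pos_of_ne_zero hvt
        exact hh ((hmemS _).mpr
          (hstep a (tl a) (hd a) (Or.inl ⟨rfl, rfl⟩) ((hmemS _).mp ht) this))
      rw [if_neg hh, if_pos ht, ← htr, trace_zero_of_dim_zero hvt, sub_self]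
    · rw [if_neg hh, if_neg ht, sub_self]
  -- Step 2 : tA is not in the ideal generated by the trace polynomial
  have k₀ : Fin (v u'.1) := ⟨0, u'.2⟩
  have k₁ : Fin (v w'.1) := ⟨0, w'.2⟩
  set p₁ : GlIdx v := ⟨u'.1, (k₀, k₀)⟩ with hp₁
  set p₂ : GlIdx v := ⟨w'.1, (k₁, k₁)⟩ with hp₂
  have hp12 : p₁ ≠ p₂ := by
    intro h
    exact huw (congrArg Sigma.fst h)
  set gev : GlIdx v → ℂ := fun p => if p = p₁ then 1 else if p = p₂ then -1 else 0 with hgev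
  have hsplit : ∀ p : GlIdx v,
      gev p = (if p = p₁ then (1 : ℂ) else 0) + (if p = p₂ then (-1 : ℂ) else 0) := by
    intro p
    by_cases h1 : p = p₁
    · simp [hgev, h1, hp12]
    · by_cases h2 : p = p₂ <;> simp [hgev, h1, h2, Ne.symm hp12]
  have hg_t : MvPolynomial.aeval gev (tracePoly v) = 0 := by
    rw [tracePoly]
    simp only [map_sum, aeval_X]
    simp only [hsplit, Finset.sum_add_distrib]
    rw [sum_diag_ind v Finset.univ u'.1 k₀ (1 : ℂ), sum_diag_ind v Finset.univ w'.1 k₁ (-1 : ℂ)]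
    simp
  have hg_tA : MvPolynomial.aeval gev tA = 1 := by
    rw [htA]
    simp only [map_sum, aeval_X]
    simp only [hsplit, Finset.sum_add_distrib]
    rw [sum_diag_ind v S u'.1 k₀ (1 : ℂ), sum_diag_ind v S w'.1 k₁ (-1 : ℂ)]
    rw [if_pos ((hmemS _).mpr hAu), if_neg (fun h => hAw ((hmemS _).mp h))]
    simp
  have hnotmem : tA ∉ Ideal.span ({tracePoly v} : Set (GlRing v)) := by
    intro hmem
    rw [Ideal.mem_span_singleton'] at hmem
    obtain ⟨c, hc⟩ := hmem
    have := congrArg (MvPolynomial.aeval gev) hc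
    rw [_root_.map_mul, hg_t, hg_tA, mul_zero] at this
    exact zero_ne_one this
  -- Step 3 : GRing v is a domain
  have hprime : Prime (tracePoly v) := prime_tracePoly u'.1 k₀
  haveI hIP : (Ideal.span ({tracePoly v} : Set (GlRing v))).IsPrime :=
    (Ideal.span_singleton_prime hprime.ne_zero).mpr hprime
  haveI : IsDomain (GRing v) := Ideal.Quotient.isDomain _
  -- Step 4 : contradiction with flatness
  letI : Algebra (GRing v) (RepRing tl hd v) := (comoment tl hd v).toAlgebra
  haveI hfl : Module.Flat (GRing v) (RepRing tl hd v) := hflat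
  set τ : GRing v := Ideal.Quotient.mk _ tA with hτ
  have hτ0 : τ ≠ 0 := by
    rw [hτ, Ne, Ideal.Quotient.eq_zero_iff_mem]
    exact hnotmem
  have hmulinj : Function.Injective fun x : GRing v => τ * x := fun a b h =>
    mul_left_cancel₀ hτ0 h
  have hsminj := flat_smul_injective (R := GRing v) (M' := RepRing tl hd v) hmulinj
  have hsm : τ • (1 : RepRing tl hd v) = τ • (0 : RepRing tl hd v) := by
    rw [smul_zero, Algebra.smul_def, mul_one, RingHom.algebraMap_toAlgebra]
    show comoment tl hd v (Ideal.Quotient.mk _ tA) = 0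
    rw [comoment, Ideal.Quotient.lift_mk]
    exact hmu
  exact one_ne_zero (hsminj hsm)

end QuiverScheme
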